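/- arXiv:1510.01607 — 2 statements merged into one kernel-verified Lean document; each statement's English description precedes it below -/
import Mathlib

section
/- For a Garside shadow B in (W,S), any w ∈ W and s ∈ S, one has s·π_B(w) ≤_R s·w. -/
open CoxeterSystem

variable {A W : Type*} [Group W] {M : CoxeterMatrix A}

/-- Right weak order: `u ≤_R v` iff `ℓ(u) + ℓ(u⁻¹v) = ℓ(v)`. -/
def wle (cs : CoxeterSystem M W) (u v : W) : Prop :=
  cs.length u + cs.length (u⁻¹ * v) = cs.length v

/-- A subset of `W` is bounded in the right weak order. -/
def Bounded (cs : CoxeterSystem M W) (X : Set W) : Prop :=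
  ∃ g, ∀ x ∈ X, wle cs x g

/-- `m` is the join (least upper bound) of `X` in the right weak order. -/
def IsJoin (cs : CoxeterSystem M W) (X : Set W) (m : W) : Prop :=
  (∀ x ∈ X, wle cs x m) ∧ ∀ u, (∀ x ∈ X, wle cs x u) → wle cs m u

/-- `v` is a suffix of `w`: `ℓ(w v⁻¹) + ℓ(v) = ℓ(w)`. -/
def IsSuffix (cs : CoxeterSystem M W) (v w : W) : Prop :=
  cs.length (w * v⁻¹) + cs.length v = cs.length w

/-- A Garside shadow: contains the simple reflections, is closed under joins of
bounded subsets, and is closed under taking suffixes. -/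
def IsGarsideShadow (cs : CoxeterSystem M W) (Bs : Set W) : Prop :=
  (∀ i, cs.simple i ∈ Bs) ∧
  (∀ X ⊆ Bs, Bounded cs X → ∀ m, IsJoin cs X m → m ∈ Bs) ∧
  (∀ w ∈ Bs, ∀ v, IsSuffix cs v w → v ∈ Bs)

/-- `π` is the `B`-projection: `π w = ⋁ {g ∈ B | g ≤_R w}`. -/
def IsProj (cs : CoxeterSystem M W) (Bs : Set W) (π : W → W) : Prop :=
  ∀ w, π w ∈ Bs ∧ IsJoin cs {g | g ∈ Bs ∧ wle cs g w} (π w)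

lemma wle_trans (cs : CoxeterSystem M W) {u v x : W}
    (h1 : wle cs u v) (h2 : wle cs v x) : wle cs u x := by
  unfold wle at *
  have t1 := cs.length_mul_le (u⁻¹ * v) (v⁻¹ * x)
  have t2 := cs.length_mul_le u (u⁻¹ * x)
  simp only [mul_assoc, mul_inv_cancel_left, mul_inv_cancel] at t1 t2
  omega

/-- For any `w ∈ W` and `s ∈ S`, one has `s·π_B(w) ≤_R s·w`. -/
theorem stmt_6 (cs : CoxeterSystem M W) (Bs : Set W) (hB : IsGarsideShadow cs Bs)
    (π : W → W) (hπ : IsProj cs Bs π) (w : W) (i : A) :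
    wle cs (cs.simple i * π w) (cs.simple i * w) := by
  obtain ⟨hpB, hub, hlub⟩ := hπ w
  set p := π w with hp
  -- p ≤_R w
  have hpw : wle cs p w := by
    apply hlub
    intro g hg; exact hg.2
  have hkey : ((cs.simple i * p)⁻¹ * (cs.simple i * w)) = p⁻¹ * w := by
    simp [mul_inv_rev, cs.inv_simple, mul_assoc, cs.simple_mul_simple_cancel_left]
  unfold wle at hpw ⊢
  rw [hkey]
  rcases cs.length_simple_mul w i with hw | hw
  · -- ℓ(sw) = ℓ(w)+1, show ℓ(sp) = ℓ(p)+1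
    rcases cs.length_simple_mul p i with hq | hq
    · omega
    · -- then s ≤_R p ≤_R w, contradiction
      exfalso
      have hsp : wle cs (cs.simple i) p := by
        unfold wle
        rw [cs.inv_simple, cs.length_simple]
        omega
      have := wle_trans cs hsp hpw
      unfold wle at this
      rw [cs.inv_simple, cs.length_simple] at this
      omega
  · -- ℓ(sw)+1 = ℓ(w), so s ≤_R w, hence s ≤_R p
    have hsw : wle cs (cs.simple i) w := by
      unfold wle
      rw [cs.inv_simple, cs.length_simple]
      omega
    have hsp : wle cs (cs.simple i) p := hub _ ⟨hB.1 i, hsw⟩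
    unfold wle at hsp
    rw [cs.inv_simple, cs.length_simple] at hsp
    omega
end

section
/- Let B be a Garside shadow in (W,S) and u, v ∈ W such that the product uv is reduced (ℓ(uv) = ℓ(u) + ℓ(v)). Then π_B(u·π_B(v)) = π_B(uv). -/
open CoxeterSystem

variable {A W : Type*} [Group W] {M : CoxeterMatrix A}

section Aux

variable (cs : CoxeterSystem M W)

lemma wle_refl (w : W) : wle cs w w := by simp [wle]

lemma wle_one (w : W) : wle cs 1 w := by simp [wle]

lemma wle_trans_s8 {a b c : W} (hab : wle cs a b) (hbc : wle cs b c) : wle cs a c := by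
  unfold wle at *
  have h1 : cs.length (a⁻¹ * c) ≤ cs.length (a⁻¹ * b) + cs.length (b⁻¹ * c) := by
    have := cs.length_mul_le (a⁻¹ * b) (b⁻¹ * c)
    rwa [show a⁻¹ * b * (b⁻¹ * c) = a⁻¹ * c by group] at this
  have h2 : cs.length c ≤ cs.length a + cs.length (a⁻¹ * c) := by
    have := cs.length_mul_le a (a⁻¹ * c)
    rwa [show a * (a⁻¹ * c) = c by group] at this
  omega

lemma wle_antisymm {a b : W} (hab : wle cs a b) (hba : wle cs b a) : a = b := by
  unfold wle at *
  have h2 : cs.length a ≤ cs.length b + cs.length (b⁻¹ * a) := by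
    have := cs.length_mul_le b (b⁻¹ * a)
    rwa [show b * (b⁻¹ * a) = a by group] at this
  have h3 : cs.length (a⁻¹ * b) = 0 := by omega
  have h4 : a⁻¹ * b = 1 := cs.length_eq_zero_iff.mp h3
  exact inv_mul_eq_one.mp h4

/-- If `a ≤_R b` and `ub` is reduced, then `ua` is reduced and `ua ≤_R ub`. -/
lemma wle_mul_left {a b u : W} (hab : wle cs a b)
    (hub : cs.length (u * b) = cs.length u + cs.length b) :
    cs.length (u * a) = cs.length u + cs.length a ∧ wle cs (u * a) (u * b) := by
  unfold wle at *
  have hx : (u * a) * (a⁻¹ * b) = u * b := by group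
  have t1 : cs.length (u * a) ≤ cs.length u + cs.length a := cs.length_mul_le u a
  have t2 : cs.length (u * b) ≤ cs.length (u * a) + cs.length (a⁻¹ * b) := by
    have := cs.length_mul_le (u * a) (a⁻¹ * b)
    rwa [hx] at this
  have hua : cs.length (u * a) = cs.length u + cs.length a := by omega
  refine ⟨hua, ?_⟩
  rw [show (u * a)⁻¹ * (u * b) = a⁻¹ * b by group]
  omega

variable {cs}
variable {Bs : Set W} {π : W → W}

lemma proj_mem (hπ : IsProj cs Bs π) (w : W) : π w ∈ Bs := (hπ w).1

lemma proj_le (hπ : IsProj cs Bs π) (w : W) : wle cs (π w) w :=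
  (hπ w).2.2 w (fun _ hx => hx.2)

lemma le_proj (hπ : IsProj cs Bs π) {g w : W} (hg : g ∈ Bs) (hgw : wle cs g w) :
    wle cs g (π w) :=
  (hπ w).2.1 g ⟨hg, hgw⟩

lemma proj_proj (hπ : IsProj cs Bs π) (w : W) : π (π w) = π w :=
  wle_antisymm cs (proj_le hπ (π w)) (le_proj hπ (proj_mem hπ w) (wle_refl cs (π w)))

/-- Key single-generator case. -/
lemma proj_simple_mul (hB : IsGarsideShadow cs Bs) (hπ : IsProj cs Bs π)
    {i : A} {v : W} (hsv : cs.length (cs.simple i * v) = 1 + cs.length v) :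
    π (cs.simple i * π v) = π (cs.simple i * v) := by
  obtain ⟨hS, hJ, hSuf⟩ := hB
  set s := cs.simple i with hs
  have hsv' : cs.length (s * v) = cs.length s + cs.length v := by
    rw [cs.length_simple]; exact hsv
  have hπv : wle cs (π v) v := proj_le hπ v
  obtain ⟨hred, hle⟩ := wle_mul_left cs hπv hsv'
  -- `hred : ℓ(s * π v) = ℓ s + ℓ (π v)`, `hle : s * π v ≤ s * v`
  -- Direction 1 : π (s * π v) ≤ π (s * v)
  have dir1 : wle cs (π (s * π v)) (π (s * v)) := by
    apply le_proj hπ (proj_mem hπ _)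
    exact wle_trans_s8 cs (proj_le hπ (s * π v)) hle
  -- Direction 2
  have hsB : s ∈ Bs := hS i
  have hssv : wle cs s (s * v) := by
    unfold wle
    rw [cs.inv_simple, cs.simple_mul_simple_cancel_left, cs.length_simple]
    omega
  set g := π (s * v) with hg
  have hsg : wle cs s g := le_proj hπ hsB hssv
  have hsgl : 1 + cs.length (s * g) = cs.length g := by
    have := hsg
    unfold wle at this
    rwa [cs.inv_simple, cs.length_simple] at this
  -- s*g is a suffix of g, hence in Bs
  have hsuffix : IsSuffix cs (s * g) g := by
    unfold IsSuffix
    rw [show g * (s * g)⁻¹ = g * g⁻¹ * s⁻¹ by group, mul_inv_cancel, one_mul,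
      cs.inv_simple, cs.length_simple]
    omega
  have hsgB : s * g ∈ Bs := hSuf g (proj_mem hπ _) _ hsuffix
  -- s*g ≤ v
  have hgsv : wle cs g (s * v) := proj_le hπ _
  have hsgv : wle cs (s * g) v := by
    unfold wle at hgsv ⊢
    rw [show (s * g)⁻¹ * v = g⁻¹ * (s⁻¹ * v) by group, cs.inv_simple] at *
    rw [show g⁻¹ * (s * v) = g⁻¹ * s * v by group] at hgsv
    rw [show g⁻¹ * (s * v) = g⁻¹ * s * v by group]
    have : cs.length (s * v) = 1 + cs.length v := hsv
    omega
  have hsgπv : wle cs (s * g) (π v) := le_proj hπ hsgB hsgv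
  have h2 := (wle_mul_left cs hsgπv hred).2
  rw [cs.simple_mul_simple_cancel_left] at h2
  exact wle_antisymm cs dir1 (le_proj hπ (proj_mem hπ _) h2)

end Aux

/-- If `uv` is reduced, then `π_B(u·π_B(v)) = π_B(uv)`. -/
theorem stmt_8 (cs : CoxeterSystem M W) (Bs : Set W) (hB : IsGarsideShadow cs Bs)
    (π : W → W) (hπ : IsProj cs Bs π) (u v : W)
    (huv : cs.length (u * v) = cs.length u + cs.length v) :
    π (u * π v) = π (u * v) := by
  suffices H : ∀ n (u v : W), cs.length u = n →
      cs.length (u * v) = cs.length u + cs.length v → π (u * π v) = π (u * v) by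
    exact H _ u v rfl huv
  clear huv u v
  intro n
  induction n using Nat.strong_induction_on with
  | _ n ih =>
    intro u v hn huv
    rcases eq_or_ne u 1 with rfl | hu1
    · simpa using proj_proj hπ v
    · obtain ⟨i, hi⟩ := cs.exists_leftDescent_of_ne_one hu1
      rw [CoxeterSystem.isLeftDescent_iff] at hi
      set u' := cs.simple i * u with hu'
      have hud : u = cs.simple i * u' := by
        rw [hu', ← mul_assoc, cs.simple_mul_simple_self, one_mul]
      have hlu' : cs.length u' + 1 = cs.length u := hi
      -- u' v is reduced
      have t1 : cs.length (u' * v) ≤ cs.length u' + cs.length v := cs.length_mul_le u' v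
      have t2 : cs.length (u * v) ≤ 1 + cs.length (u' * v) := by
        have := cs.length_mul_le (cs.simple i) (u' * v)
        rw [cs.length_simple] at this
        rwa [hud, mul_assoc]
      have hu'v : cs.length (u' * v) = cs.length u' + cs.length v := by omega
      -- reduced products with π v
      have hπv : wle cs (π v) v := proj_le hπ v
      have hu'πv := (wle_mul_left cs hπv hu'v).1
      -- step 1 : π (u * v) = π (s i * π (u' * v))
      have hsu'v : cs.length (cs.simple i * (u' * v)) = 1 + cs.length (u' * v) := by
        rw [← mul_assoc, ← hud]; omega
      have e1 : π (cs.simple i * π (u' * v)) = π (u * v) := by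
        rw [proj_simple_mul hB hπ hsu'v, ← mul_assoc, ← hud]
      -- step 2 : IH on u'
      have e2 : π (u' * π v) = π (u' * v) := ih (cs.length u') (by omega) u' v rfl hu'v
      -- step 3 : single-generator lemma on w := u' * π v
      have hsu'πv : cs.length (cs.simple i * (u' * π v)) = 1 + cs.length (u' * π v) := by
        rw [← mul_assoc, ← hud]
        have := (wle_mul_left cs hπv huv).1
        omega
      have e3 : π (cs.simple i * π (u' * π v)) = π (cs.simple i * (u' * π v)) :=
        proj_simple_mul hB hπ hsu'πv
      calc π (u * π v) = π (cs.simple i * (u' * π v)) := by rw [← mul_assoc, ← hud]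
        _ = π (cs.simple i * π (u' * π v)) := e3.symm
        _ = π (cs.simple i * π (u' * v)) := by rw [e2]
        _ = π (u * v) := e1
end
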